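/- For every finite player set N and every subset S ⊆ N, the function p*_{N\S}(π) = ∏_{B∈π} (|B|−1)!/(n−s)! (where n = |N|, s = |S|) defines a probability distribution on the set Π(N\S) of partitions of N\S, i.e., p*_{N\S}(π) ≥ 0 for all π and ∑_{π∈Π(N\S)} p*_{N\S}(π) = 1. -/

import Mathlib

open Finset BigOperators

namespace TUX

/-- A (raw) game in partition function form: assigns a real worth to each
coalition together with a partition (of the outside players). -/
abbrev Game := Finset ℕ → Finset (Finset ℕ) → ℝ

/-- A TU game (characteristic function). -/
abbrev TUGame := Finset ℕ → ℝ

/-- A solution for TUX games: given a player set and a game, assigns payoffs. -/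
abbrev Sol := Finset ℕ → Game → ℕ → ℝ

/-- `w` is a genuine TUX game: the empty coalition has worth 0. -/
def IsTUX (w : Game) : Prop := ∀ π, w ∅ π = 0

/-- `π` is a partition of the finite set `M`. -/
def IsPartition (M : Finset ℕ) (π : Finset (Finset ℕ)) : Prop :=
  (∀ B ∈ π, B ⊆ M) ∧ ∅ ∉ π ∧ ∀ x ∈ M, (π.filter (fun B => x ∈ B)).card = 1

instance (M : Finset ℕ) : DecidablePred (IsPartition M) := fun π => by
  unfold IsPartition; infer_instance

/-- The finite set of all partitions of `M`. -/
def partitionsOf (M : Finset ℕ) : Finset (Finset (Finset ℕ)) :=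
  (M.powerset.powerset).filter (IsPartition M)

/-- The Ewens(θ = 1) probability of the partition `π` of `M`:
`p*_M(π) = ∏_{B ∈ π} (|B| - 1)! / |M|!`. -/
noncomputable def pstar (M : Finset ℕ) (π : Finset (Finset ℕ)) : ℝ :=
  (∏ B ∈ π, ((B.card - 1).factorial : ℝ)) / (M.card.factorial : ℝ)

/-- The block of `π` containing `j` (junk if `π` is not a partition containing `j`). -/
def blockOf (π : Finset (Finset ℕ)) (j : ℕ) : Finset ℕ :=
  (π.filter (fun B => j ∈ B)).sup id

/-- Add player `i` to the block `B` of `π`. -/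
def addToBlock (π : Finset (Finset ℕ)) (i : ℕ) (B : Finset ℕ) : Finset (Finset ℕ) :=
  insert (insert i B) (π.erase B)

/-- The restriction operator `r⋆` removing a single player `i` from a game on `N`:
`w₋ᵢ(S,π) = (1/(n-s)) (w(S, π₊ᵢ⇝∅) + ∑_{j ∈ N∖(S∪{i})} w(S, π₊ᵢ⇝π(j)))`. -/
noncomputable def restrict1 (N : Finset ℕ) (w : Game) (i : ℕ) : Game :=
  fun S π =>
    ((N.card : ℝ) - (S.card : ℝ))⁻¹ *
      (w S (insert {i} π) + ∑ j ∈ (N \ S).erase i, w S (addToBlock π i (blockOf π j)))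

/-- Iterated removal of a list of players. -/
noncomputable def restrictL : Finset ℕ → Game → List ℕ → Game
  | _, w, [] => w
  | N, w, i :: l => restrictL (N.erase i) (restrict1 N w i) l

/-- Removal of a set of players (via the increasing enumeration; by path
independence of `r⋆` the order is immaterial). -/
noncomputable def restrictSet (N : Finset ℕ) (w : Game) (T : Finset ℕ) : Game :=
  restrictL N w (T.sort (· ≤ ·))

/-- The average TU game `v̄_w` of a TUX game `w` on `N`. -/
noncomputable def avg (N : Finset ℕ) (w : Game) : TUGame :=
  fun S => ∑ π ∈ partitionsOf (N \ S), pstar (N \ S) π * w S π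

/-- The auxiliary TU game `v*_w(S) = w₋(N∖S)(S,∅)`. -/
noncomputable def auxGame (N : Finset ℕ) (w : Game) : TUGame :=
  fun S => restrictSet N w (N \ S) S ∅

/-- The Shapley value of a TU game on player set `N`. -/
noncomputable def shapley (N : Finset ℕ) (v : TUGame) (i : ℕ) : ℝ :=
  ∑ S ∈ (N.erase i).powerset,
    (((S.card.factorial : ℝ) * ((N.card - S.card - 1).factorial : ℝ)) / (N.card.factorial : ℝ)) *
      (v (insert i S) - v S)

/-- The MPW solution: the Shapley value of the average game. -/
noncomputable def MPW (N : Finset ℕ) (w : Game) (i : ℕ) : ℝ := shapley N (avg N w) i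

/-- The MPW solution as a solution for TUX games. -/
noncomputable def MPWsol : Sol := fun N w i => MPW N w i

/-- The scaled Dirac TUX game `δ_{T,τ}` on `N`. -/
noncomputable def scaledDirac (N T : Finset ℕ) (τ : Finset (Finset ℕ)) : Game :=
  fun S π => if S = T ∧ π = τ then (pstar (N \ T) τ)⁻¹ else 0

/-- `τ₋S`: remove the players of `S` from each block of `τ`, discarding empty blocks. -/
def partRemove (τ : Finset (Finset ℕ)) (S : Finset ℕ) : Finset (Finset ℕ) :=
  (τ.image (fun B => B \ S)).erase ∅

/-- The Sobolev-reduced TUX game `w₋ⱼ^{So,φ}` on `N ∖ {j}`. -/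
noncomputable def sobRed (N : Finset ℕ) (φ : Sol) (w : Game) (j : ℕ) : Game :=
  fun S π =>
    ((S.card : ℝ) / ((N.card : ℝ) - 1)) * (w (insert j S) π - φ N w j) +
      (1 - (S.card : ℝ) / ((N.card : ℝ) - 1)) * restrict1 N w j S π

/-- The Hart–Mas-Colell reduced TUX game `w₋T^{HM,φ}` on `N ∖ T`. -/
noncomputable def hmRed (N : Finset ℕ) (φ : Sol) (w : Game) (T : Finset ℕ) : Game :=
  fun S π => w (S ∪ T) π - ∑ j ∈ T, φ (S ∪ T) (restrictSet N w (N \ (S ∪ T))) j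

/-- Efficiency for TUX games. -/
def EfficientX (φ : Sol) : Prop :=
  ∀ (N : Finset ℕ) (w : Game), IsTUX w → ∑ i ∈ N, φ N w i = w N ∅

/-- Balanced contributions for TUX games (w.r.t. the restriction operator `r⋆`). -/
def BalancedContributionsX (φ : Sol) : Prop :=
  ∀ (N : Finset ℕ) (w : Game), IsTUX w → ∀ i ∈ N, ∀ j ∈ N,
    φ N w i - φ (N.erase j) (restrict1 N w j) i
      = φ N w j - φ (N.erase i) (restrict1 N w i) j

/-- 2-standardness for TUX games. -/
def TwoStandardX (φ : Sol) : Prop :=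
  ∀ i j : ℕ, i ≠ j → ∀ w : Game, IsTUX w →
    φ {i, j} w i
      = w {i} {({j} : Finset ℕ)}
        + (w {i, j} ∅ - w {j} {({i} : Finset ℕ)} - w {i} {({j} : Finset ℕ)}) / 2

/-- Sobolev consistency for TUX games. -/
def SobolevConsistentX (φ : Sol) : Prop :=
  ∀ (N : Finset ℕ) (w : Game), IsTUX w → ∀ i ∈ N, ∀ j ∈ N, i ≠ j →
    φ N w i = φ (N.erase j) (sobRed N φ w j) i

/-- Hart–Mas-Colell consistency (single-player removal) for TUX games. -/
def HMConsistentX (φ : Sol) : Prop :=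
  ∀ (N : Finset ℕ) (w : Game), IsTUX w → ∀ i ∈ N, ∀ j ∈ N, i ≠ j →
    φ N w i = φ (N.erase j) (hmRed N φ w {j}) i

/-- Set Hart–Mas-Colell consistency (removal of a coalition) for TUX games. -/
def SetHMConsistentX (φ : Sol) : Prop :=
  ∀ (N : Finset ℕ) (w : Game), IsTUX w → ∀ i ∈ N, ∀ T ⊆ N.erase i,
    φ N w i = φ (N \ T) (hmRed N φ w T) i

/-- The finite set of embedded coalitions `(T,τ)` of `N` with `T ≠ ∅`. -/
def embeddedNE (N : Finset ℕ) : Finset (Finset ℕ × Finset (Finset ℕ)) :=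
  (N.powerset ×ˢ N.powerset.powerset).filter
    (fun p => p.1.Nonempty ∧ IsPartition (N \ p.1) p.2)

end TUX

namespace PstarAux
open TUX

lemma mem_partitionsOf {M : Finset ℕ} {π : Finset (Finset ℕ)} :
    π ∈ partitionsOf M ↔ IsPartition M π := by
  constructor
  · exact fun h => (Finset.mem_filter.mp h).2
  · intro h
    exact Finset.mem_filter.mpr ⟨Finset.mem_powerset.mpr
      (fun B hB => Finset.mem_powerset.mpr (h.1 B hB)), h⟩

lemma filter_eq_singleton {M : Finset ℕ} {π : Finset (Finset ℕ)} (h : IsPartition M π)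
    {x : ℕ} (hx : x ∈ M) : π.filter (fun B => x ∈ B) = {blockOf π x} := by
  obtain ⟨B, hB⟩ := Finset.card_eq_one.mp (h.2.2 x hx)
  have hb : blockOf π x = B := by rw [blockOf, hB]; simp
  rw [hb, hB]

lemma blockOf_mem {M : Finset ℕ} {π : Finset (Finset ℕ)} (h : IsPartition M π)
    {x : ℕ} (hx : x ∈ M) : blockOf π x ∈ π ∧ x ∈ blockOf π x := by
  have := filter_eq_singleton h hx
  have hmem : blockOf π x ∈ π.filter (fun B => x ∈ B) := by rw [this]; simp
  exact ⟨(Finset.mem_filter.mp hmem).1, (Finset.mem_filter.mp hmem).2⟩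

lemma block_unique {M : Finset ℕ} {π : Finset (Finset ℕ)} (h : IsPartition M π)
    {x : ℕ} {B : Finset ℕ} (hB : B ∈ π) (hx : x ∈ B) : B = blockOf π x := by
  have hxM : x ∈ M := h.1 B hB hx
  have := filter_eq_singleton h hxM
  have hmem : B ∈ π.filter (fun C => x ∈ C) := Finset.mem_filter.mpr ⟨hB, hx⟩
  rw [this, Finset.mem_singleton] at hmem
  exact hmem

lemma erase_isPartition {M : Finset ℕ} {π : Finset (Finset ℕ)} (h : IsPartition M π)
    {x : ℕ} (hx : x ∈ M) :
    IsPartition (M \ blockOf π x) (π.erase (blockOf π x)) := by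
  set A := blockOf π x with hA
  refine ⟨?_, ?_, ?_⟩
  · intro B hB y hy
    have hBπ : B ∈ π := Finset.mem_of_mem_erase hB
    have hBA : B ≠ A := Finset.ne_of_mem_erase hB
    refine Finset.mem_sdiff.mpr ⟨h.1 B hBπ hy, fun hyA => hBA ?_⟩
    rw [block_unique h hBπ hy]
    exact (block_unique h (blockOf_mem h hx).1 hyA).symm
  · exact fun hc => h.2.1 (Finset.mem_of_mem_erase hc)
  · intro y hy
    rw [Finset.mem_sdiff] at hy
    have hnm : A ∉ π.filter (fun B => y ∈ B) :=
      fun hAf => hy.2 (Finset.mem_filter.mp hAf).2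
    rw [Finset.filter_erase, Finset.erase_eq_of_notMem hnm]
    exact h.2.2 y hy.1

lemma insert_isPartition {M A : Finset ℕ} {σ : Finset (Finset ℕ)} {x : ℕ}
    (hAM : A ⊆ M) (hxA : x ∈ A) (hσ : IsPartition (M \ A) σ) :
    IsPartition M (insert A σ) := by
  refine ⟨?_, ?_, ?_⟩
  · intro B hB
    rcases Finset.mem_insert.mp hB with rfl | hB
    · exact hAM
    · exact fun y hy => (Finset.mem_sdiff.mp (hσ.1 B hB hy)).1
  · intro hc
    rcases Finset.mem_insert.mp hc with hc | hc
    · rw [← hc] at hxA; exact Finset.notMem_empty x hxA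
    · exact hσ.2.1 hc
  · intro y hy
    rw [Finset.filter_insert]
    by_cases hyA : y ∈ A
    · rw [if_pos hyA]
      have hempty : σ.filter (fun B => y ∈ B) = ∅ := by
        refine Finset.filter_eq_empty_iff.mpr fun B hB hyB => ?_
        exact (Finset.mem_sdiff.mp (hσ.1 B hB hyB)).2 hyA
      rw [hempty]; simp
    · rw [if_neg hyA]
      exact hσ.2.2 y (Finset.mem_sdiff.mpr ⟨hy, hyA⟩)

lemma A_not_mem_sigma {M A : Finset ℕ} {σ : Finset (Finset ℕ)} {x : ℕ}
    (hxA : x ∈ A) (hσ : IsPartition (M \ A) σ) : A ∉ σ := by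
  intro hc
  exact (Finset.mem_sdiff.mp (hσ.1 A hc hxA)).2 hxA

def fN (M : Finset ℕ) : ℕ := ∑ π ∈ partitionsOf M, ∏ B ∈ π, (B.card - 1).factorial

lemma partitionsOf_empty : partitionsOf (∅ : Finset ℕ) = {∅} := by
  ext π
  simp only [mem_partitionsOf, Finset.mem_singleton]
  constructor
  · intro h
    rw [Finset.eq_empty_iff_forall_notMem]
    intro B hB
    have hBe : B = ∅ := Finset.subset_empty.mp (h.1 B hB)
    exact h.2.1 (hBe ▸ hB)
  · rintro rfl
    exact ⟨by simp, by simp, by simp⟩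

lemma sum_factorial_powerset (T : Finset ℕ) :
    ∑ B ∈ T.powerset, B.card.factorial * (T.card - B.card).factorial
      = (T.card + 1) * T.card.factorial := by
  rw [Finset.sum_powerset_apply_card (fun k => k.factorial * (T.card - k).factorial)]
  have : ∀ m ∈ Finset.range (T.card + 1),
      T.card.choose m • (m.factorial * (T.card - m).factorial) = T.card.factorial := by
    intro m hm
    rw [smul_eq_mul, ← mul_assoc]
    exact Nat.choose_mul_factorial_mul_factorial (Nat.lt_succ_iff.mp (Finset.mem_range.mp hm))
  rw [Finset.sum_congr rfl this, Finset.sum_const, Finset.card_range, smul_eq_mul]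

lemma key_count {M : Finset ℕ} {x : ℕ} (hx : x ∈ M) :
    ∑ A ∈ M.powerset.filter (fun A => x ∈ A),
      (A.card - 1).factorial * (M.card - A.card).factorial = M.card.factorial := by
  have hbij : ∑ A ∈ M.powerset.filter (fun A => x ∈ A),
      (A.card - 1).factorial * (M.card - A.card).factorial
      = ∑ B ∈ (M.erase x).powerset, B.card.factorial * ((M.erase x).card - B.card).factorial := by
    refine Finset.sum_nbij' (fun A => A.erase x) (fun B => insert x B) ?_ ?_ ?_ ?_ ?_
    · intro A hA
      rw [Finset.mem_filter, Finset.mem_powerset] at hA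
      exact Finset.mem_powerset.mpr (Finset.erase_subset_erase x hA.1)
    · intro B hB
      rw [Finset.mem_powerset] at hB
      refine Finset.mem_filter.mpr ⟨Finset.mem_powerset.mpr ?_, Finset.mem_insert_self x B⟩
      exact Finset.insert_subset hx (hB.trans (Finset.erase_subset x M))
    · intro A hA
      rw [Finset.mem_filter] at hA
      exact Finset.insert_erase hA.2
    · intro B hB
      rw [Finset.mem_powerset] at hB
      exact Finset.erase_insert (fun hxB => (Finset.mem_erase.mp (hB hxB)).1 rfl)
    · intro A hA
      rw [Finset.mem_filter, Finset.mem_powerset] at hA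
      rw [Finset.card_erase_of_mem hA.2, Finset.card_erase_of_mem hx]
      have h1 : 1 ≤ A.card := Finset.card_pos.mpr ⟨x, hA.2⟩
      have h2 : A.card ≤ M.card := Finset.card_le_card hA.1
      congr 2
      omega
  rw [hbij, sum_factorial_powerset, Finset.card_erase_of_mem hx]
  have h1 : 0 < M.card := Finset.card_pos.mpr ⟨x, hx⟩
  rw [Nat.sub_add_cancel h1]
  exact Nat.mul_factorial_pred h1.ne'

lemma fN_eq (M : Finset ℕ) : fN M = M.card.factorial := by
  induction M using Finset.strongInductionOn with
  | _ M ih =>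
    rcases M.eq_empty_or_nonempty with rfl | ⟨x, hx⟩
    · rw [fN, partitionsOf_empty]; simp
    · have hstep : fN M = ∑ p ∈ (M.powerset.filter (fun A => x ∈ A)).sigma
          (fun A => partitionsOf (M \ A)),
          (p.1.card - 1).factorial * ∏ B ∈ p.2, (B.card - 1).factorial := by
        rw [fN]
        refine Finset.sum_nbij' (fun π => ⟨blockOf π x, π.erase (blockOf π x)⟩)
          (fun p => insert p.1 p.2) ?_ ?_ ?_ ?_ ?_
        · intro π hπ
          rw [mem_partitionsOf] at hπ
          refine Finset.mem_sigma.mpr ⟨Finset.mem_filter.mpr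
            ⟨Finset.mem_powerset.mpr (hπ.1 _ (blockOf_mem hπ hx).1), (blockOf_mem hπ hx).2⟩, ?_⟩
          exact mem_partitionsOf.mpr (erase_isPartition hπ hx)
        · rintro ⟨A, σ⟩ hp
          rw [Finset.mem_sigma, Finset.mem_filter, Finset.mem_powerset,
            mem_partitionsOf] at hp
          exact mem_partitionsOf.mpr (insert_isPartition hp.1.1 hp.1.2 hp.2)
        · intro π hπ
          rw [mem_partitionsOf] at hπ
          simp only
          exact Finset.insert_erase (blockOf_mem hπ hx).1
        · rintro ⟨A, σ⟩ hp
          rw [Finset.mem_sigma, Finset.mem_filter, Finset.mem_powerset,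
            mem_partitionsOf] at hp
          have hAmem : A ∈ insert A σ := Finset.mem_insert_self A σ
          have hpart := insert_isPartition hp.1.1 hp.1.2 hp.2
          have hblk : blockOf (insert A σ) x = A :=
            (block_unique hpart hAmem hp.1.2).symm
          have : (insert A σ).erase (blockOf (insert A σ) x) = σ := by
            rw [hblk]; exact Finset.erase_insert (A_not_mem_sigma hp.1.2 hp.2)
          simp only [hblk]
          exact Sigma.ext rfl (heq_of_eq (Finset.erase_insert (A_not_mem_sigma hp.1.2 hp.2)))
        · intro π hπ
          rw [mem_partitionsOf] at hπ
          exact (Finset.mul_prod_erase π _ (blockOf_mem hπ hx).1).symm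
      rw [hstep, Finset.sum_sigma]
      have hinner : ∀ A ∈ M.powerset.filter (fun A => x ∈ A),
          ∑ σ ∈ partitionsOf (M \ A),
            (A.card - 1).factorial * ∏ B ∈ σ, (B.card - 1).factorial
          = (A.card - 1).factorial * (M.card - A.card).factorial := by
        intro A hA
        rw [Finset.mem_filter, Finset.mem_powerset] at hA
        rw [← Finset.mul_sum]
        have hss : M \ A ⊂ M := Finset.sdiff_ssubset hA.1 ⟨x, hA.2⟩
        rw [show (∑ σ ∈ partitionsOf (M \ A), ∏ B ∈ σ, (B.card - 1).factorial) = fN (M \ A) from rfl,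
          ih _ hss, Finset.card_sdiff_of_subset hA.1]
      rw [Finset.sum_congr rfl hinner]
      exact key_count hx

end PstarAux

open TUX in
/-- For every finite player set `N` and `S ⊆ N`, the Ewens(1)
weights `p*` form a probability distribution on the partitions of `N \ S`. -/
theorem pstar_prob_dist (N S : Finset ℕ) (hS : S ⊆ N) :
    (∀ π ∈ partitionsOf (N \ S), 0 ≤ pstar (N \ S) π) ∧
      ∑ π ∈ partitionsOf (N \ S), pstar (N \ S) π = 1 := by
  constructor
  · intro π _
    unfold pstar
    positivity
  · unfold pstar
    rw [← Finset.sum_div]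
    have hnum : ∑ π ∈ partitionsOf (N \ S), ∏ B ∈ π, ((B.card - 1).factorial : ℝ)
        = (PstarAux.fN (N \ S) : ℝ) := by
      rw [PstarAux.fN]
      push_cast
      rfl
    rw [hnum, PstarAux.fN_eq]
    exact div_self (by exact_mod_cast Nat.factorial_ne_zero _)
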